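/- If D ∈ Q(N₋,n,N₊) and C ∈ Q(M₋,m,M₊), then χ(D·A·C) = χ(A). Moreover, for any nonnegative integers μ, ν, the padded matrix diag(1_μ, A, 1_ν), regarded as a block matrix with row blocks (μ+N₋, n, N₊+ν) and column blocks (μ+M₋, m, M₊+ν), satisfies χ(diag(1_μ, A, 1_ν)) = χ(A). -/

import Mathlib

namespace Neretin

open Matrix

/-- Membership in the group `Q` of invertible block matrices of the form
`[[*,*,*],[0,1,*],[0,0,*]]` with respect to a three-block partition of the index set. -/
def IsQ {k : Type*} [Field k] {α β γ : Type*} [Fintype α] [Fintype β] [Fintype γ]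
    [DecidableEq α] [DecidableEq β] [DecidableEq γ]
    (M : Matrix (α ⊕ β ⊕ γ) (α ⊕ β ⊕ γ) k) : Prop :=
  IsUnit M ∧
  (∀ i j, M (Sum.inr (Sum.inl i)) (Sum.inl j) = 0) ∧
  (∀ i j, M (Sum.inr (Sum.inl i)) (Sum.inr (Sum.inl j)) = (if i = j then (1 : k) else 0)) ∧
  (∀ i j, M (Sum.inr (Sum.inr i)) (Sum.inl j) = 0) ∧
  (∀ i j, M (Sum.inr (Sum.inr i)) (Sum.inr (Sum.inl j)) = 0)

/-- The linear map `(y, v) ↦ (y, v, 0)`. -/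
def embed3 (k : Type*) [Field k] (α : Type*) (m : ℕ) (γ : Type*) :
    ((α → k) × (Fin m → k)) →ₗ[k] ((α ⊕ Fin m ⊕ γ) → k) where
  toFun p := Sum.elim p.1 (Sum.elim p.2 0)
  map_add' p q := by funext i; rcases i with i | i | i <;> simp
  map_smul' c p := by funext i; rcases i with i | i | i <;> simp

/-- The characteristic linear relation `χ(A)` of a block matrix `A`: the subspace of all
pairs `(v, u)` such that `A · (y, v, 0)ᵀ = (x, u, 0)ᵀ` for some `x`, `y`. -/
noncomputable def chi {k : Type*} [Field k] {α' γ' α γ : Type*} [Fintype α] [Fintype γ]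
    {n m : ℕ} (A : Matrix (α' ⊕ Fin n ⊕ γ') (α ⊕ Fin m ⊕ γ) k) :
    Submodule k ((Fin m → k) × (Fin n → k)) :=
  Submodule.map
    ((LinearMap.snd k (α → k) (Fin m → k)).prod
      ((LinearMap.funLeft k k (fun i : Fin n => (Sum.inr (Sum.inl i) : α' ⊕ Fin n ⊕ γ'))).comp
        (A.mulVecLin.comp (embed3 k α m γ))))
    (LinearMap.ker
      ((LinearMap.funLeft k k (fun i : γ' => (Sum.inr (Sum.inr i) : α' ⊕ Fin n ⊕ γ'))).comp
        (A.mulVecLin.comp (embed3 k α m γ))))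

/-- The padded matrix `diag(1_μ, A, 1_ν)`, with row blocks `(μ ⊕ α', n, γ' ⊕ ν)` and
column blocks `(μ ⊕ α, m, γ ⊕ ν)`. -/
def pad {k : Type*} [Field k] {α' γ' α γ : Type*} {n m : ℕ} (μ ν : ℕ)
    (A : Matrix (α' ⊕ Fin n ⊕ γ') (α ⊕ Fin m ⊕ γ) k) :
    Matrix ((Fin μ ⊕ α') ⊕ Fin n ⊕ (γ' ⊕ Fin ν)) ((Fin μ ⊕ α) ⊕ Fin m ⊕ (γ ⊕ Fin ν)) k :=
  Matrix.of fun r c =>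
    match r, c with
    | Sum.inl (Sum.inl i), Sum.inl (Sum.inl j) => if i = j then 1 else 0
    | Sum.inl (Sum.inr i), Sum.inl (Sum.inr j) => A (Sum.inl i) (Sum.inl j)
    | Sum.inl (Sum.inr i), Sum.inr (Sum.inl j) => A (Sum.inl i) (Sum.inr (Sum.inl j))
    | Sum.inl (Sum.inr i), Sum.inr (Sum.inr (Sum.inl j)) => A (Sum.inl i) (Sum.inr (Sum.inr j))
    | Sum.inr (Sum.inl i), Sum.inl (Sum.inr j) => A (Sum.inr (Sum.inl i)) (Sum.inl j)
    | Sum.inr (Sum.inl i), Sum.inr (Sum.inl j) => A (Sum.inr (Sum.inl i)) (Sum.inr (Sum.inl j))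
    | Sum.inr (Sum.inl i), Sum.inr (Sum.inr (Sum.inl j)) => A (Sum.inr (Sum.inl i)) (Sum.inr (Sum.inr j))
    | Sum.inr (Sum.inr (Sum.inl i)), Sum.inl (Sum.inr j) => A (Sum.inr (Sum.inr i)) (Sum.inl j)
    | Sum.inr (Sum.inr (Sum.inl i)), Sum.inr (Sum.inl j) => A (Sum.inr (Sum.inr i)) (Sum.inr (Sum.inl j))
    | Sum.inr (Sum.inr (Sum.inl i)), Sum.inr (Sum.inr (Sum.inl j)) => A (Sum.inr (Sum.inr i)) (Sum.inr (Sum.inr j))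
    | Sum.inr (Sum.inr (Sum.inr i)), Sum.inr (Sum.inr (Sum.inr j)) => if i = j then 1 else 0
    | _, _ => 0


section QLemmas
variable {k : Type*} [Field k] {α β γ : Type*} [Fintype α] [Fintype β] [Fintype γ]
  [DecidableEq α] [DecidableEq β] [DecidableEq γ]

lemma IsQ.row_gamma {C : Matrix (α ⊕ β ⊕ γ) (α ⊕ β ⊕ γ) k} (hC : IsQ C)
    (w : (α ⊕ β ⊕ γ) → k) (i : γ) :
    C.mulVec w (Sum.inr (Sum.inr i)) =
      ∑ j, C (Sum.inr (Sum.inr i)) (Sum.inr (Sum.inr j)) * w (Sum.inr (Sum.inr j)) := by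
  obtain ⟨-, h1, h2, h3, h4⟩ := hC
  simp [mulVec, dotProduct, Fintype.sum_sum_type, h3, h4]

lemma IsQ.row_beta {C : Matrix (α ⊕ β ⊕ γ) (α ⊕ β ⊕ γ) k} (hC : IsQ C)
    (w : (α ⊕ β ⊕ γ) → k) (i : β) :
    C.mulVec w (Sum.inr (Sum.inl i)) =
      w (Sum.inr (Sum.inl i)) +
        ∑ j, C (Sum.inr (Sum.inl i)) (Sum.inr (Sum.inr j)) * w (Sum.inr (Sum.inr j)) := by
  obtain ⟨-, h1, h2, h3, h4⟩ := hC
  simp [mulVec, dotProduct, Fintype.sum_sum_type, h1, h2, ite_mul]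

lemma IsQ.gamma_eq_zero {C : Matrix (α ⊕ β ⊕ γ) (α ⊕ β ⊕ γ) k} (hC : IsQ C)
    (w : (α ⊕ β ⊕ γ) → k) (h : ∀ i, C.mulVec w (Sum.inr (Sum.inr i)) = 0) :
    ∀ i, w (Sum.inr (Sum.inr i)) = 0 := by
  set q : Matrix γ γ k := C.submatrix (fun i : γ => Sum.inr (Sum.inr i))
      (fun i : γ => (Sum.inr (Sum.inr i) : α ⊕ β ⊕ γ)) with hqdef
  have hq : ∀ z (i : γ), C.mulVec z (Sum.inr (Sum.inr i)) =
      q.mulVec (fun j => z (Sum.inr (Sum.inr j))) i := by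
    intro z i
    rw [hC.row_gamma]
    rfl
  obtain ⟨B, hB1, hB2⟩ := isUnit_iff_exists.mp hC.1
  have hsurj : Function.Surjective q.mulVecLin := by
    intro t
    refine ⟨fun j => B.mulVec (Sum.elim (0 : α → k) (Sum.elim (0 : β → k) t)) (Sum.inr (Sum.inr j)), ?_⟩
    have : C.mulVec (B.mulVec (Sum.elim (0 : α → k) (Sum.elim (0 : β → k) t))) = Sum.elim (0 : α → k) (Sum.elim (0 : β → k) t) := by
      rw [Matrix.mulVec_mulVec, hB1, Matrix.one_mulVec]
    funext i
    rw [mulVecLin_apply, ← hq, this]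
    rfl
  have hinj : Function.Injective q.mulVecLin :=
    (LinearMap.injective_iff_surjective).mpr hsurj
  have : (fun j => w (Sum.inr (Sum.inr j))) = 0 := by
    apply hinj
    rw [map_zero]
    funext i
    rw [mulVecLin_apply, ← hq, h]
    rfl
  exact fun i => congrFun this i

end QLemmas

lemma mem_chi_iff {k : Type*} [Field k] {α' γ' α γ : Type*} [Fintype α] [Fintype γ]
    {n m : ℕ} (A : Matrix (α' ⊕ Fin n ⊕ γ') (α ⊕ Fin m ⊕ γ) k)
    (v : Fin m → k) (u : Fin n → k) :
    (v, u) ∈ chi A ↔ ∃ y : α → k,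
      (∀ i, A.mulVec (Sum.elim y (Sum.elim v 0)) (Sum.inr (Sum.inr i)) = 0) ∧
      (∀ i, A.mulVec (Sum.elim y (Sum.elim v 0)) (Sum.inr (Sum.inl i)) = u i) := by
  simp only [chi, Submodule.mem_map, LinearMap.mem_ker, LinearMap.prod_apply,
    LinearMap.coe_comp, Function.comp_apply, LinearMap.snd_apply, Prod.mk.injEq,
    mulVecLin_apply, Prod.exists, Function.prod]
  constructor
  · rintro ⟨y, v', hker, hv, hu⟩
    subst hv
    refine ⟨y, fun i => ?_, fun i => ?_⟩
    · have := congrFun hker i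
      simpa [embed3, LinearMap.funLeft] using this
    · have := congrFun hu i
      simpa [embed3, LinearMap.funLeft] using this
  · rintro ⟨y, h0, hu⟩
    refine ⟨y, v, ?_, rfl, ?_⟩
    · funext i
      simpa [embed3, LinearMap.funLeft] using h0 i
    · funext i
      simpa [embed3, LinearMap.funLeft] using hu i

lemma chi_mul {k : Type*} [Field k] {α' γ' α γ : Type*}
    [Fintype α'] [Fintype γ'] [Fintype α] [Fintype γ]
    [DecidableEq α'] [DecidableEq γ'] [DecidableEq α] [DecidableEq γ]
    {n m : ℕ}
    (A : Matrix (α' ⊕ Fin n ⊕ γ') (α ⊕ Fin m ⊕ γ) k)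
    (D : Matrix (α' ⊕ Fin n ⊕ γ') (α' ⊕ Fin n ⊕ γ') k)
    (C : Matrix (α ⊕ Fin m ⊕ γ) (α ⊕ Fin m ⊕ γ) k)
    (hD : IsQ D) (hC : IsQ C) :
    chi (D * A * C) = chi A := by
  ext ⟨v, u⟩
  rw [mem_chi_iff, mem_chi_iff]
  constructor
  · rintro ⟨y', hg, hb⟩
    set w' : (α ⊕ Fin m ⊕ γ) → k := Sum.elim y' (Sum.elim v 0) with hw'
    have h3 : ∀ j, w' (Sum.inr (Sum.inr j)) = 0 := fun j => rfl
    set z := C.mulVec w' with hz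
    have hz3 : ∀ j, z (Sum.inr (Sum.inr j)) = 0 := fun j => by
      rw [hz, hC.row_gamma]; simp [h3]
    have hz2 : ∀ j, z (Sum.inr (Sum.inl j)) = v j := fun j => by
      rw [hz, hC.row_beta]; simp [h3]; rfl
    have hzelim : z = Sum.elim (fun i => z (Sum.inl i)) (Sum.elim v 0) := by
      funext j
      rcases j with j | j | j
      · rfl
      · exact hz2 j
      · exact hz3 j
    have key : ∀ r, (D * A * C).mulVec w' r = D.mulVec (A.mulVec z) r := by
      intro r
      rw [hz, Matrix.mulVec_mulVec, Matrix.mulVec_mulVec]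
    have hg2 : ∀ i, D.mulVec (A.mulVec z) (Sum.inr (Sum.inr i)) = 0 :=
      fun i => ((key _).symm).trans (hg i)
    have hγ := hD.gamma_eq_zero (A.mulVec z) hg2
    refine ⟨fun i => z (Sum.inl i), fun i => ?_, fun i => ?_⟩
    · rw [← hzelim]; exact hγ i
    · rw [← hzelim]
      have hb2 : D.mulVec (A.mulVec z) (Sum.inr (Sum.inl i)) = u i :=
        ((key _).symm).trans (hb i)
      rw [hD.row_beta] at hb2
      simpa [hγ] using hb2
  · rintro ⟨y, hg, hb⟩
    set w : (α ⊕ Fin m ⊕ γ) → k := Sum.elim y (Sum.elim v 0) with hw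
    obtain ⟨B, hB1, hB2⟩ := isUnit_iff_exists.mp hC.1
    set z := B.mulVec w with hz
    have hCz : C.mulVec z = w := by
      rw [hz, Matrix.mulVec_mulVec, hB1, Matrix.one_mulVec]
    have hz3 : ∀ i, z (Sum.inr (Sum.inr i)) = 0 :=
      hC.gamma_eq_zero z (fun i => by rw [hCz]; rfl)
    have hz2 : ∀ i, z (Sum.inr (Sum.inl i)) = v i := fun i => by
      have h := congrFun hCz (Sum.inr (Sum.inl i))
      rw [hC.row_beta] at h
      simpa [hz3, hw] using h
    have hzelim : Sum.elim (fun i => z (Sum.inl i)) (Sum.elim v (0 : γ → k)) = z := by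
      funext j
      rcases j with j | j | j
      · rfl
      · exact (hz2 j).symm
      · exact (hz3 j).symm
    have key : ∀ r, (D * A * C).mulVec
        (Sum.elim (fun i => z (Sum.inl i)) (Sum.elim v 0)) r = D.mulVec (A.mulVec w) r := by
      intro r
      rw [hzelim, ← Matrix.mulVec_mulVec, hCz, ← Matrix.mulVec_mulVec]
    refine ⟨fun i => z (Sum.inl i), fun i => ?_, fun i => ?_⟩
    · rw [key, hD.row_gamma]
      simp [hg]
    · rw [key, hD.row_beta]
      simp only [hg, mul_zero, Finset.sum_const_zero, add_zero]
      exact hb i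

lemma chi_pad {k : Type*} [Field k] {α' γ' α γ : Type*} [Fintype α] [Fintype γ]
    {n m : ℕ} (μ ν : ℕ)
    (A : Matrix (α' ⊕ Fin n ⊕ γ') (α ⊕ Fin m ⊕ γ) k) :
    chi (pad μ ν A) = chi A := by
  have hbeta : ∀ (y : (Fin μ ⊕ α) → k) (v : Fin m → k) (i : Fin n),
      (pad μ ν A).mulVec (Sum.elim y (Sum.elim v 0)) (Sum.inr (Sum.inl i)) =
      A.mulVec (Sum.elim (y ∘ Sum.inr) (Sum.elim v 0)) (Sum.inr (Sum.inl i)) := by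
    intro y v i
    simp [pad, mulVec, dotProduct, Fintype.sum_sum_type]
  have hgamma : ∀ (y : (Fin μ ⊕ α) → k) (v : Fin m → k) (i : γ'),
      (pad μ ν A).mulVec (Sum.elim y (Sum.elim v 0)) (Sum.inr (Sum.inr (Sum.inl i))) =
      A.mulVec (Sum.elim (y ∘ Sum.inr) (Sum.elim v 0)) (Sum.inr (Sum.inr i)) := by
    intro y v i
    simp [pad, mulVec, dotProduct, Fintype.sum_sum_type]
  have hnu : ∀ (y : (Fin μ ⊕ α) → k) (v : Fin m → k) (i : Fin ν),
      (pad μ ν A).mulVec (Sum.elim y (Sum.elim v 0)) (Sum.inr (Sum.inr (Sum.inr i))) = 0 := by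
    intro y v i
    simp [pad, mulVec, dotProduct, Fintype.sum_sum_type]
  ext ⟨v, u⟩
  rw [mem_chi_iff, mem_chi_iff]
  constructor
  · rintro ⟨y, hg, hb⟩
    refine ⟨y ∘ Sum.inr, fun i => ?_, fun i => ?_⟩
    · rw [← hgamma]; exact hg (Sum.inl i)
    · rw [← hbeta]; exact hb i
  · rintro ⟨y, hg, hb⟩
    refine ⟨Sum.elim 0 y, fun i => ?_, fun i => ?_⟩
    · rcases i with i | i
      · rw [hgamma]; exact hg i
      · exact hnu _ _ i
    · rw [hbeta]; exact hb i

/-- The characteristic linear relation is invariant: `χ(D·A·C) = χ(A)`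
for `D ∈ Q(N₋,n,N₊)`, `C ∈ Q(M₋,m,M₊)`, and `χ(diag(1_μ, A, 1_ν)) = χ(A)` for all `μ, ν`. -/
theorem chi_invariant (k : Type*) [Field k]
    (N₁ n N₂ M₁ m M₂ : ℕ)
    (hNM : N₁ + n + N₂ = M₁ + m + M₂)
    (A : Matrix (Fin N₁ ⊕ Fin n ⊕ Fin N₂) (Fin M₁ ⊕ Fin m ⊕ Fin M₂) k)
    (hA : ∃ A' : Matrix (Fin M₁ ⊕ Fin m ⊕ Fin M₂) (Fin N₁ ⊕ Fin n ⊕ Fin N₂) k,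
      A * A' = 1 ∧ A' * A = 1)
    (D : Matrix (Fin N₁ ⊕ Fin n ⊕ Fin N₂) (Fin N₁ ⊕ Fin n ⊕ Fin N₂) k)
    (C : Matrix (Fin M₁ ⊕ Fin m ⊕ Fin M₂) (Fin M₁ ⊕ Fin m ⊕ Fin M₂) k)
    (hD : IsQ D) (hC : IsQ C) :
    chi (D * A * C) = chi A ∧ ∀ μ ν : ℕ, chi (pad μ ν A) = chi A := by
  exact ⟨chi_mul A D C hD hC, fun μ ν => chi_pad μ ν A⟩

end Neretin
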